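/- Let μ₁, μ₂ be atomless probability measures on ℝ with finite second moment, with quantile functions Q₁, Q₂, and let γ ∈ [0,1]. Then the pushforward of μ₁ under the map (1-γ)·id + γ·T, where T = Q₂ ∘ F₁ is the monotone rearrangement from μ₁ to μ₂, has quantile function (1-γ)Q₁ + γQ₂. -/

import Mathlib

open MeasureTheory ProbabilityTheory Filter

/-- Quantile (right-continuous inverse of the CDF) of a measure on ℝ. -/
noncomputable def quantile (μ : Measure ℝ) (t : ℝ) : ℝ :=
  sInf {x | t ≤ ProbabilityTheory.cdf μ x}

open Set Topology

variable (μ : Measure ℝ) [IsProbabilityMeasure μ]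

lemma quantile_set_nonempty {t : ℝ} (ht1 : t < 1) : {x | t ≤ cdf μ x}.Nonempty :=
  ((tendsto_cdf_atTop μ).eventually (eventually_ge_nhds ht1)).exists

lemma quantile_set_bddBelow {t : ℝ} (ht : 0 < t) : BddBelow {x | t ≤ cdf μ x} := by
  obtain ⟨y, hy⟩ := ((tendsto_cdf_atBot μ).eventually (eventually_lt_nhds ht)).exists
  refine ⟨y, fun z hz => ?_⟩
  by_contra h
  push_neg at h
  exact absurd (le_trans hz (monotone_cdf μ h.le)) (not_le.mpr hy)

lemma le_cdf_quantile {t : ℝ} (ht : 0 < t) (ht1 : t < 1) : t ≤ cdf μ (quantile μ t) := by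
  have hne := quantile_set_nonempty μ ht1
  have hbd := quantile_set_bddBelow μ ht
  have h : ∀ x ∈ Ioi (quantile μ t), t ≤ cdf μ x := by
    intro x hx
    obtain ⟨y, hy, hyx⟩ := (csInf_lt_iff hbd hne).mp hx
    exact hy.trans (monotone_cdf μ hyx.le)
  have h2 : Tendsto (cdf μ) (𝓝[>] (quantile μ t)) (𝓝 (cdf μ (quantile μ t))) :=
    ((cdf μ).right_continuous _).tendsto.mono_left
      (nhdsWithin_mono _ Ioi_subset_Ici_self)
  exact ge_of_tendsto h2 (eventually_nhdsWithin_of_forall h)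

lemma quantile_le_iff {t x : ℝ} (ht : 0 < t) (ht1 : t < 1) :
    quantile μ t ≤ x ↔ t ≤ cdf μ x := by
  constructor
  · intro h; exact (le_cdf_quantile μ ht ht1).trans (monotone_cdf μ h)
  · intro h; exact csInf_le (quantile_set_bddBelow μ ht) h

lemma monotoneOn_quantile : MonotoneOn (quantile μ) (Ioo 0 1) := by
  intro s hs t ht hst
  refine le_csInf (quantile_set_nonempty μ ht.2) fun x hx => ?_
  exact csInf_le (quantile_set_bddBelow μ hs.1) (hst.trans hx)

lemma cdf_quantile [NullSingletonClass μ] {t : ℝ} (ht : 0 < t) (ht1 : t < 1) :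
    cdf μ (quantile μ t) = t := by
  refine le_antisymm ?_ (le_cdf_quantile μ ht ht1)
  have hsing : (cdf μ).measure {quantile μ t} = 0 := by
    rw [measure_cdf]; exact measure_singleton _
  rw [StieltjesFunction.measure_singleton] at hsing
  have h1 : cdf μ (quantile μ t) ≤ Function.leftLim (cdf μ) (quantile μ t) := by
    have := ENNReal.ofReal_eq_zero.mp hsing; linarith
  have h2 : Function.leftLim (cdf μ) (quantile μ t) ≤ t := by
    refine le_of_tendsto ((monotone_cdf μ).tendsto_leftLim _)
      (eventually_nhdsWithin_of_forall fun x hx => ?_)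
    by_contra h
    push_neg at h
    exact absurd (csInf_le (quantile_set_bddBelow μ ht) h.le) (not_le.mpr hx)
  linarith

lemma vol_Iic_inter {c : ℝ} (h1 : c ≤ 1) :
    volume (Iic c ∩ Ioo (0:ℝ) 1) = ENNReal.ofReal c := by
  rcases lt_or_eq_of_le h1 with h1 | rfl
  · have : Iic c ∩ Ioo (0:ℝ) 1 = Ioc 0 c := by
      ext u
      simp only [mem_inter_iff, mem_Iic, mem_Ioo, mem_Ioc]
      exact ⟨fun h => ⟨h.2.1, h.1⟩, fun h => ⟨h.2, h.1, lt_of_le_of_lt h.2 h1⟩⟩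
    rw [this, Real.volume_Ioc, sub_zero]
  · have : Iic (1:ℝ) ∩ Ioo (0:ℝ) 1 = Ioo 0 1 :=
      inter_eq_right.mpr fun u hu => hu.2.le
    rw [this, Real.volume_Ioo]; norm_num

lemma map_quantile : (volume.restrict (Ioo (0:ℝ) 1)).map (quantile μ) = μ := by
  have hae : AEMeasurable (quantile μ) (volume.restrict (Ioo (0:ℝ) 1)) :=
    aemeasurable_restrict_of_monotoneOn measurableSet_Ioo (monotoneOn_quantile μ)
  haveI : IsProbabilityMeasure (volume.restrict (Ioo (0:ℝ) 1)) :=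
    ⟨by simp [Real.volume_Ioo]⟩
  haveI : IsProbabilityMeasure ((volume.restrict (Ioo (0:ℝ) 1)).map (quantile μ)) :=
    Measure.isProbabilityMeasure_map hae
  refine Measure.ext_of_Iic _ _ fun x => ?_
  rw [Measure.map_apply_of_aemeasurable hae measurableSet_Iic,
    Measure.restrict_apply' measurableSet_Ioo]
  have hset : quantile μ ⁻¹' Iic x ∩ Ioo 0 1 = Iic (cdf μ x) ∩ Ioo 0 1 := by
    ext u
    simp only [mem_inter_iff, mem_preimage, mem_Iic, mem_Ioo]
    constructor
    · rintro ⟨h, h0, h1⟩; exact ⟨(quantile_le_iff μ h0 h1).mp h, h0, h1⟩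
    · rintro ⟨h, h0, h1⟩; exact ⟨(quantile_le_iff μ h0 h1).mpr h, h0, h1⟩
  rw [hset, vol_Iic_inter (cdf_le_one μ x), ofReal_cdf]

lemma tendsto_quantile_left {t : ℝ} (ht : 0 < t) (ht1 : t < 1) :
    Tendsto (quantile μ) (𝓝[Ioo 0 t] t) (𝓝 (quantile μ t)) := by
  rw [tendsto_order]
  constructor
  · intro a ha
    have hex : ∃ s₀ ∈ Ioo (0:ℝ) t, a < quantile μ s₀ := by
      by_contra h
      push_neg at h
      have hc : t ≤ cdf μ a := by
        by_contra hc
        push_neg at hc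
        obtain ⟨s, hs1, hs2⟩ := exists_between hc
        have hs0 : 0 < s := lt_of_le_of_lt (cdf_nonneg μ a) hs1
        have := (le_cdf_quantile μ hs0 (hs2.trans ht1)).trans
          (monotone_cdf μ (h s ⟨hs0, hs2⟩))
        linarith
      exact absurd (csInf_le (quantile_set_bddBelow μ ht) hc) (not_le.mpr ha)
    obtain ⟨s₀, hs₀, ha₀⟩ := hex
    have hev : ∀ᶠ s in 𝓝[Ioo 0 t] t, s₀ < s :=
      eventually_nhdsWithin_of_eventually_nhds (eventually_gt_nhds hs₀.2)
    filter_upwards [hev, self_mem_nhdsWithin] with s hs₀s hs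
    exact ha₀.trans_le (monotoneOn_quantile μ ⟨hs₀.1, hs₀.2.trans ht1⟩
      ⟨hs.1, hs.2.trans ht1⟩ hs₀s.le)
  · intro a ha
    refine eventually_nhdsWithin_of_forall fun s hs => ?_
    exact lt_of_le_of_lt (monotoneOn_quantile μ ⟨hs.1, hs.2.trans ht1⟩ ⟨ht, ht1⟩ hs.2.le) ha

/-- the pushforward of `μ₁` under `(1-γ)·id + γ·T`, `T` the monotone
rearrangement from `μ₁` to `μ₂`, has quantile function `(1-γ)Q₁ + γQ₂` (a.e. on `(0,1)`). -/
theorem sgd_step_quantile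
    (μ₁ μ₂ : Measure ℝ) [IsProbabilityMeasure μ₁] [IsProbabilityMeasure μ₂]
    [NullSingletonClass μ₁] [NullSingletonClass μ₂]
    (h1 : Integrable (fun x => x ^ 2) μ₁) (h2 : Integrable (fun x => x ^ 2) μ₂)
    (γ : ℝ) (hγ : γ ∈ Set.Icc (0:ℝ) 1) :
    ∀ᵐ t ∂(volume.restrict (Set.Ioo (0:ℝ) 1)),
      quantile
        (μ₁.map (fun x => (1 - γ) * x + γ * quantile μ₂ (ProbabilityTheory.cdf μ₁ x))) t
        = (1 - γ) * quantile μ₁ t + γ * quantile μ₂ t := by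

  obtain ⟨hγ0, hγ1⟩ := hγ
  set U : Measure ℝ := volume.restrict (Set.Ioo (0:ℝ) 1) with hU
  haveI hUP : IsProbabilityMeasure U := ⟨by rw [hU]; simp [Real.volume_Ioo]⟩
  set G : ℝ → ℝ := fun t => (1 - γ) * quantile μ₁ t + γ * quantile μ₂ t with hG
  set f : ℝ → ℝ := fun x => (1 - γ) * x + γ * quantile μ₂ (cdf μ₁ x) with hf
  have hQ1 : AEMeasurable (quantile μ₁) U :=
    aemeasurable_restrict_of_monotoneOn measurableSet_Ioo (monotoneOn_quantile μ₁)
  have hQ2 : AEMeasurable (quantile μ₂) U :=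
    aemeasurable_restrict_of_monotoneOn measurableSet_Ioo (monotoneOn_quantile μ₂)
  have hGU : AEMeasurable G U :=
    (aemeasurable_const.mul hQ1).add (aemeasurable_const.mul hQ2)
  have hGmono : MonotoneOn G (Ioo 0 1) := by
    intro a ha b hb hab
    exact add_le_add
      (mul_le_mul_of_nonneg_left (monotoneOn_quantile μ₁ ha hb hab) (by linarith))
      (mul_le_mul_of_nonneg_left (monotoneOn_quantile μ₂ ha hb hab) hγ0)
  have hmap1 : U.map (quantile μ₁) = μ₁ := map_quantile μ₁
  have hF1 : Measurable (cdf μ₁) := (cdf μ₁).mono.measurable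
  have hmapF : μ₁.map (cdf μ₁) = U := by
    calc μ₁.map (cdf μ₁) = (U.map (quantile μ₁)).map (cdf μ₁) := by rw [hmap1]
      _ = U.map ((cdf μ₁) ∘ (quantile μ₁)) :=
          AEMeasurable.map_map_of_aemeasurable (by rw [hmap1]; exact hF1.aemeasurable) hQ1
      _ = U.map id := by
          refine Measure.map_congr ?_
          filter_upwards [ae_restrict_mem measurableSet_Ioo] with t ht
          exact cdf_quantile μ₁ ht.1 ht.2
      _ = U := Measure.map_id
  have hfae : AEMeasurable f μ₁ := by
    have hc : AEMeasurable ((quantile μ₂) ∘ (cdf μ₁)) μ₁ := by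
      refine AEMeasurable.comp_aemeasurable ?_ hF1.aemeasurable
      rw [hmapF]; exact hQ2
    exact (aemeasurable_const.mul aemeasurable_id).add (aemeasurable_const.mul hc)
  have hν : μ₁.map f = U.map G := by
    calc μ₁.map f = (U.map (quantile μ₁)).map f := by rw [hmap1]
      _ = U.map (f ∘ (quantile μ₁)) :=
          AEMeasurable.map_map_of_aemeasurable (by rw [hmap1]; exact hfae) hQ1
      _ = U.map G := by
          refine Measure.map_congr ?_
          filter_upwards [ae_restrict_mem measurableSet_Ioo] with t ht
          show f (quantile μ₁ t) = G t
          rw [hf, hG]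
          simp only [cdf_quantile μ₁ ht.1 ht.2]
  haveI : IsProbabilityMeasure (U.map G) := Measure.isProbabilityMeasure_map hGU
  filter_upwards [ae_restrict_mem measurableSet_Ioo] with t ht
  obtain ⟨ht0, ht1⟩ := ht
  show quantile (μ₁.map f) t = G t
  rw [hν]
  have key : ∀ x : ℝ, t ≤ cdf (U.map G) x ↔
      ENNReal.ofReal t ≤ volume ({s | G s ≤ x} ∩ Ioo 0 1) := by
    intro x
    rw [← ENNReal.ofReal_le_ofReal_iff (cdf_nonneg (U.map G) x), ofReal_cdf,
      Measure.map_apply_of_aemeasurable hGU measurableSet_Iic, hU,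
      Measure.restrict_apply' measurableSet_Ioo]
    rfl
  have hmemGt : t ≤ cdf (U.map G) (G t) := by
    rw [key]
    calc ENNReal.ofReal t = volume (Ioo (0:ℝ) t) := by rw [Real.volume_Ioo, sub_zero]
      _ ≤ volume ({s | G s ≤ G t} ∩ Ioo 0 1) := by
          refine measure_mono fun s hs => ⟨?_, hs.1, hs.2.trans ht1⟩
          exact hGmono ⟨hs.1, hs.2.trans ht1⟩ ⟨ht0, ht1⟩ hs.2.le
  have hsubset : ∀ x : ℝ, ∀ s ∈ Ioo (0:ℝ) 1, x < G s →
      {u | G u ≤ x} ∩ Ioo 0 1 ⊆ Ioo 0 s := by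
    rintro x s hs hxs u ⟨hGu, hu0, hu1⟩
    refine ⟨hu0, ?_⟩
    by_contra hus
    push_neg at hus
    have := hGmono hs ⟨hu0, hu1⟩ hus
    simp only [mem_setOf_eq] at hGu
    linarith
  have hbdd : BddBelow {x | t ≤ cdf (U.map G) x} := by
    refine ⟨G (t/2) - 1, fun x hx => ?_⟩
    by_contra hc
    push_neg at hc
    have hs2 : t/2 ∈ Ioo (0:ℝ) 1 := ⟨half_pos ht0, (half_lt_self ht0).trans ht1⟩
    have h1 := (key x).mp hx
    have h2 : volume ({u | G u ≤ x} ∩ Ioo 0 1) ≤ ENNReal.ofReal (t/2) := by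
      calc volume ({u | G u ≤ x} ∩ Ioo 0 1) ≤ volume (Ioo (0:ℝ) (t/2)) :=
            measure_mono (hsubset x (t/2) hs2 (by linarith))
        _ = ENNReal.ofReal (t/2) := by rw [Real.volume_Ioo, sub_zero]
    have h3 := h1.trans h2
    rw [ENNReal.ofReal_le_ofReal_iff (by positivity)] at h3
    linarith
  have hle : quantile (U.map G) t ≤ G t := csInf_le hbdd hmemGt
  have hge : G t ≤ quantile (U.map G) t := by
    refine le_csInf ⟨G t, hmemGt⟩ fun x hx => ?_
    have hforall : ∀ s ∈ Ioo (0:ℝ) t, G s ≤ x := by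
      intro s hs
      by_contra hGs
      push_neg at hGs
      have h1 := (key x).mp hx
      have h2 : volume ({u | G u ≤ x} ∩ Ioo 0 1) ≤ ENNReal.ofReal s := by
        calc volume ({u | G u ≤ x} ∩ Ioo 0 1) ≤ volume (Ioo (0:ℝ) s) :=
              measure_mono (hsubset x s ⟨hs.1, hs.2.trans ht1⟩ hGs)
          _ = ENNReal.ofReal s := by rw [Real.volume_Ioo, sub_zero]
      have h3 := h1.trans h2
      rw [ENNReal.ofReal_le_ofReal_iff hs.1.le] at h3
      linarith [hs.2]
    haveI : (𝓝[Ioo (0:ℝ) t] t).NeBot := by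
      apply mem_closure_iff_nhdsWithin_neBot.mp
      rw [closure_Ioo ht0.ne]
      exact ⟨ht0.le, le_refl t⟩
    have hT : Tendsto G (𝓝[Ioo (0:ℝ) t] t) (𝓝 (G t)) := by
      rw [hG]
      exact (tendsto_const_nhds.mul (tendsto_quantile_left μ₁ ht0 ht1)).add
        (tendsto_const_nhds.mul (tendsto_quantile_left μ₂ ht0 ht1))
    exact le_of_tendsto hT (eventually_nhdsWithin_of_forall hforall)
  exact le_antisymm hle hge
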